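/- arXiv:0810.5646 — 2 statements merged into one kernel-verified Lean document; each statement's English description precedes it below -/
import Mathlib

section
/- Let n ≥ 1 be an integer, let 1 < p < p*(n), let A₀ be the unique positive radially symmetric classical solution of ΔA − A + Aᵖ = 0 in ℝⁿ with lim_{|x|→∞} A(x) = 0 and A(0) = max A, let α = ∫_{ℝⁿ} A₀(y)² dy, and let f(ω) = (ω − 1) ω^{n/2 − 2/(p−1)}. Suppose k > 0 and there exists ω > 0 with f(ω) = kα. Then the function A(x) := ω^{1/(p−1)} A₀(√ω · x) is a positive radially symmetric classical solution of ΔA − A + Aᵖ − k A ∫_{ℝⁿ} A² dx = 0 in ℝⁿ with lim_{|x|→∞} A(x) = 0 and A(0) = max_{x∈ℝⁿ} A(x). -/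
open Filter MeasureTheory Real

/-- The Laplacian of `A : ℝⁿ → ℝ`, as the sum of the pure second partial derivatives. -/
noncomputable def laplacian {n : ℕ} (A : EuclideanSpace ℝ (Fin n) → ℝ)
    (x : EuclideanSpace ℝ (Fin n)) : ℝ :=
  ∑ i : Fin n, iteratedFDeriv ℝ 2 A x ![EuclideanSpace.single i 1, EuclideanSpace.single i 1]

/-- `A` is a positive radially symmetric classical solution of `ΔA - ωA + A^p = 0` on `ℝⁿ`,
tending to `0` at infinity, with its maximum attained at the origin. -/
def IsSolOmega (n : ℕ) (p ω : ℝ) (A : EuclideanSpace ℝ (Fin n) → ℝ) : Prop :=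
  ContDiff ℝ 2 A ∧ (∀ x, 0 < A x) ∧ (∀ x y, ‖x‖ = ‖y‖ → A x = A y) ∧
    Tendsto A (cocompact _) (nhds 0) ∧ (∀ x, A x ≤ A 0) ∧
    ∀ x, laplacian A x - ω * A x + A x ^ p = 0

/-- `A` is a positive radially symmetric classical solution, with `A²` integrable, of the
globally coupled equation `ΔA - A + A^p - k A ∫ A² = 0` on `ℝⁿ`, tending to `0` at infinity,
with its maximum attained at the origin. -/
def IsSolK (n : ℕ) (p k : ℝ) (A : EuclideanSpace ℝ (Fin n) → ℝ) : Prop :=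
  ContDiff ℝ 2 A ∧ (∀ x, 0 < A x) ∧ (∀ x y, ‖x‖ = ‖y‖ → A x = A y) ∧
    Tendsto A (cocompact _) (nhds 0) ∧ (∀ x, A x ≤ A 0) ∧
    Integrable (fun x => (A x) ^ 2) ∧
    ∀ x, laplacian A x - A x + A x ^ p - k * A x * (∫ y, (A y) ^ 2) = 0

section AuxLemmas

variable {n : ℕ}



lemma line_hasDerivAt {f : EuclideanSpace ℝ (Fin n) → ℝ} (hf : ContDiff ℝ 2 f)
    (x v : EuclideanSpace ℝ (Fin n)) (t : ℝ) :
    HasDerivAt (fun s : ℝ => f (x + s • v)) (fderiv ℝ f (x + t • v) v) t := by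
  have h1 : HasDerivAt (fun s : ℝ => x + s • v) v t := by
    simpa using ((hasDerivAt_id t).smul_const v).const_add x
  have h2 := ((hf.differentiable (by norm_num)) (x + t • v)).hasFDerivAt
  exact h2.comp_hasDerivAt t h1

lemma line_deriv2 {f : EuclideanSpace ℝ (Fin n) → ℝ} (hf : ContDiff ℝ 2 f)
    (x v : EuclideanSpace ℝ (Fin n)) :
    HasDerivAt (fun t : ℝ => fderiv ℝ f (x + t • v) v)
      (iteratedFDeriv ℝ 2 f x ![v, v]) 0 := by
  have hF : ContDiff ℝ 1 (fderiv ℝ f) := hf.fderiv_right (by norm_num)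
  have h1 : HasDerivAt (fun s : ℝ => x + s • v) v 0 := by
    simpa using ((hasDerivAt_id (0:ℝ)).smul_const v).const_add x
  have h2 : HasFDerivAt (fderiv ℝ f) (fderiv ℝ (fderiv ℝ f) x) (x + (0:ℝ) • v) := by
    simpa using ((hF.differentiable one_ne_zero) x).hasFDerivAt
  have h3 : HasDerivAt (fun t : ℝ => fderiv ℝ f (x + t • v)) (fderiv ℝ (fderiv ℝ f) x v) 0 :=
    h2.comp_hasDerivAt 0 h1
  have h4 := h3.clm_apply (hasDerivAt_const 0 v)
  rw [iteratedFDeriv_two_apply]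
  simpa using h4

/-- If the line restriction of `f` through `x` in direction `v` has explicit first derivative `ψ`
everywhere and `ψ` has derivative `c` at `0`, then the second iterated derivative is `c`. -/
lemma iteratedFDeriv_line {f : EuclideanSpace ℝ (Fin n) → ℝ} (hf : ContDiff ℝ 2 f)
    (x v : EuclideanSpace ℝ (Fin n)) {ψ : ℝ → ℝ} {c : ℝ}
    (hψ : ∀ t, HasDerivAt (fun s : ℝ => f (x + s • v)) (ψ t) t)
    (hc : HasDerivAt ψ c 0) :
    iteratedFDeriv ℝ 2 f x ![v, v] = c := by
  have heq : ψ = fun t => fderiv ℝ f (x + t • v) v := by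
    funext t; exact (hψ t).unique (line_hasDerivAt hf x v t)
  rw [heq] at hc
  exact (hc.unique (line_deriv2 hf x v)).symm

lemma secondDeriv_nonpos_of_isLocalMax {g g' : ℝ → ℝ} {c : ℝ}
    (hg : ∀ t, HasDerivAt g (g' t) t) (hg' : HasDerivAt g' c 0)
    (hmax : IsLocalMax g 0) : c ≤ 0 := by
  by_contra hc
  push_neg at hc
  have hg'0 : g' 0 = 0 := hmax.hasDerivAt_eq_zero (hg 0)
  have hslope := hasDerivAt_iff_tendsto_slope.1 hg'
  have hev : ∀ᶠ t in nhdsWithin (0:ℝ) (Set.Ioi 0), 0 < g' t := by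
    have h1 : ∀ᶠ t in nhdsWithin (0:ℝ) {(0:ℝ)}ᶜ, 0 < slope g' 0 t :=
      hslope.eventually (eventually_gt_nhds hc)
    have h2 : nhdsWithin (0:ℝ) (Set.Ioi 0) ≤ nhdsWithin (0:ℝ) {(0:ℝ)}ᶜ :=
      nhdsWithin_mono _ (fun t ht => ne_of_gt ht)
    filter_upwards [h2 h1, self_mem_nhdsWithin] with t ht ht0
    have : slope g' 0 t = g' t / t := by simp [slope_def_field, hg'0]
    rw [this] at ht
    exact (div_pos_iff.1 ht).elim (fun h => h.1)
      (fun h => absurd h.2 (not_lt.2 (le_of_lt (Set.mem_Ioi.1 ht0))))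
  have hevmax : ∀ᶠ t in nhdsWithin (0:ℝ) (Set.Ioi 0), g t ≤ g 0 :=
    nhdsWithin_le_nhds hmax
  obtain ⟨s, hs, hsub⟩ := (hev.and hevmax).exists_mem
  obtain ⟨u, hu, hIoo⟩ := mem_nhdsGT_iff_exists_Ioo_subset.1 hs
  have hu0 : (0:ℝ) < u := hu
  have hcont : ContinuousOn g (Set.Icc 0 (u/2)) := fun t _ => (hg t).continuousAt.continuousWithinAt
  obtain ⟨ξ, hξ, hξeq⟩ := exists_hasDerivAt_eq_slope g g' (by linarith) hcont
    (fun t ht => hg t)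
  have hξs : ξ ∈ s := hIoo ⟨hξ.1, lt_trans hξ.2 (by linarith)⟩
  have h1 : 0 < g' ξ := (hsub _ hξs).1
  have hts : u/2 ∈ s := hIoo ⟨by linarith, by linarith⟩
  have h2 : g (u/2) ≤ g 0 := (hsub _ hts).2
  rw [hξeq] at h1
  have : (g (u/2) - g 0) / (u/2 - 0) ≤ 0 :=
    div_nonpos_of_nonpos_of_nonneg (by linarith) (by linarith)
  linarith

lemma laplacian_nonpos_of_isLocalMax {v : EuclideanSpace ℝ (Fin n) → ℝ}
    (hv : ContDiff ℝ 2 v) {x₀ : EuclideanSpace ℝ (Fin n)} (hmax : IsLocalMax v x₀) :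
    laplacian v x₀ ≤ 0 := by
  apply Finset.sum_nonpos
  intro i _
  set e : EuclideanSpace ℝ (Fin n) := EuclideanSpace.single i 1 with he
  have hgm : IsLocalMax (fun t : ℝ => v (x₀ + t • e)) 0 := by
    have hc : ContinuousAt (fun t : ℝ => x₀ + t • e) 0 :=
      (continuous_const.add (continuous_id.smul continuous_const)).continuousAt
    have h0 : x₀ + (0:ℝ) • e = x₀ := by simp
    have ht : Filter.Tendsto (fun t : ℝ => x₀ + t • e) (nhds 0) (nhds x₀) := by
      have := hc.tendsto; rwa [h0] at this
    have := ht.eventually hmax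
    simpa [IsLocalMax, IsMaxFilter, h0] using this
  exact secondDeriv_nonpos_of_isLocalMax (line_hasDerivAt hv x₀ e) (line_deriv2 hv x₀ e) hgm

lemma laplacian_sub {f g : EuclideanSpace ℝ (Fin n) → ℝ} (hf : ContDiff ℝ 2 f)
    (hg : ContDiff ℝ 2 g) (x : EuclideanSpace ℝ (Fin n)) :
    laplacian (fun y => f y - g y) x = laplacian f x - laplacian g x := by
  unfold laplacian
  rw [← Finset.sum_sub_distrib]
  apply Finset.sum_congr rfl
  intro i _
  have h1 : (fun y => f y - g y) = f + (-1 : ℝ) • g := by funext y; simp [Pi.add_apply]; ring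
  have hsm : ContDiff ℝ 2 ((-1:ℝ) • g) := hg.const_smul (-1:ℝ)
  rw [h1, iteratedFDeriv_add_apply hf.contDiffAt hsm.contDiffAt, iteratedFDeriv_const_smul_apply hg.contDiffAt]
  simp
  ring

lemma laplacian_scale {f : EuclideanSpace ℝ (Fin n) → ℝ} (hf : ContDiff ℝ 2 f)
    (c s : ℝ) (x : EuclideanSpace ℝ (Fin n)) :
    laplacian (fun y => c * f (s • y)) x = c * s ^ 2 * laplacian f (s • x) := by
  unfold laplacian
  rw [Finset.mul_sum]
  apply Finset.sum_congr rfl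
  intro i _
  set e : EuclideanSpace ℝ (Fin n) := EuclideanSpace.single i 1 with he
  set y := s • x with hy
  have hcomp : ContDiff ℝ 2 (fun z : EuclideanSpace ℝ (Fin n) => c * f (s • z)) :=
    contDiff_const.mul (hf.comp (contDiff_const_smul s))
  have hkey : ∀ t : ℝ, (fun z => c * f (s • z)) (x + t • e) = c * f (y + (s * t) • e) := by
    intro t
    simp only [smul_add, smul_smul, hy, mul_comm t s]
  have hψf : ∀ u : ℝ, HasDerivAt (fun u' : ℝ => f (y + u' • e)) (fderiv ℝ f (y + u • e) e) u :=
    line_hasDerivAt hf y e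
  have hψ : ∀ t : ℝ, HasDerivAt (fun t' : ℝ => (fun z => c * f (s • z)) (x + t' • e))
      (c * (fderiv ℝ f (y + (s * t) • e) e * s)) t := by
    intro t
    have h1 : HasDerivAt (fun t' : ℝ => s * t') s t := by
      simpa using (hasDerivAt_id t).const_mul s
    have h2 := HasDerivAt.comp t (hψf (s * t)) h1
    have h3 := h2.const_mul c
    refine HasDerivAt.congr_of_eventuallyEq h3 ?_
    filter_upwards with t'
    show c * f (s • (x + t' • e)) = _
    simp only [Function.comp, smul_add, smul_smul, hy]
  have hc2 : HasDerivAt (fun t : ℝ => c * (fderiv ℝ f (y + (s * t) • e) e * s))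
      (c * s ^ 2 * iteratedFDeriv ℝ 2 f y ![e, e]) 0 := by
    have h1 : HasDerivAt (fun t' : ℝ => s * t') s 0 := by
      simpa using (hasDerivAt_id (0:ℝ)).const_mul s
    have h2 : HasDerivAt (fun u : ℝ => fderiv ℝ f (y + u • e) e)
        (iteratedFDeriv ℝ 2 f y ![e, e]) (s * 0) := by
      rw [mul_zero]; exact line_deriv2 hf y e
    have h3 := ((HasDerivAt.comp 0 h2 h1).mul_const s).const_mul c
    refine h3.congr_deriv ?_
    ring
  exact iteratedFDeriv_line hcomp x e hψ hc2

lemma norm_add_smul_single_sq (x : EuclideanSpace ℝ (Fin n)) (i : Fin n) (t : ℝ) :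
    ‖x + t • EuclideanSpace.single i (1:ℝ)‖^2 = ‖x‖^2 + 2 * (x i) * t + t^2 := by
  rw [norm_add_sq_real]
  have h1 : (inner ℝ x (t • EuclideanSpace.single i (1:ℝ)) : ℝ) = t * x i := by
    rw [real_inner_smul_right]
    have := EuclideanSpace.inner_single_right (𝕜 := ℝ) i 1 x
    simp only [conj_trivial, one_mul] at this
    rw [this]
  have h2 : ‖t • EuclideanSpace.single i (1:ℝ)‖^2 = t^2 := by
    rw [norm_smul, EuclideanSpace.norm_single, mul_pow, norm_one, one_pow, mul_one,
      Real.norm_eq_abs, sq_abs]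
  rw [h1, h2]; ring

lemma sum_coord_sq (x : EuclideanSpace ℝ (Fin n)) : ∑ i : Fin n, (x i)^2 = ‖x‖^2 := by
  rw [EuclideanSpace.norm_eq, Real.sq_sqrt (by positivity)]
  apply Finset.sum_congr rfl
  intro i _
  rw [Real.norm_eq_abs, sq_abs]

lemma barrier_contDiff (C : ℝ) (m : ℕ) :
    ContDiff ℝ 2 (fun x : EuclideanSpace ℝ (Fin n) => C * (1 + ‖x‖^2) ^ (-(m:ℤ))) := by
  have h1 : ContDiff ℝ 2 (fun x : EuclideanSpace ℝ (Fin n) => 1 + ‖x‖^2) :=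
    contDiff_const.add (contDiff_norm_sq ℝ)
  have heq : (fun x : EuclideanSpace ℝ (Fin n) => C * (1 + ‖x‖^2) ^ (-(m:ℤ)))
      = fun x => C * ((1 + ‖x‖^2)^m)⁻¹ := by
    funext x; rw [zpow_neg, zpow_natCast]
  rw [heq]
  exact contDiff_const.mul ((h1.pow m).inv (fun x => by positivity))

lemma barrier_laplacian_le {m : ℕ} {C : ℝ} (hC : 0 ≤ C) (x : EuclideanSpace ℝ (Fin n))
    (hbig : 8*(m:ℝ)*((m:ℝ)+1) ≤ 1 + ‖x‖^2) :
    laplacian (fun y => C * (1 + ‖y‖^2) ^ (-(m:ℤ))) x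
      ≤ (1/2) * (C * (1 + ‖x‖^2) ^ (-(m:ℤ))) := by
  set q0 : ℝ := 1 + ‖x‖^2 with hq0
  have hq0pos : 0 < q0 := by positivity
  have hq0ne : q0 ≠ 0 := ne_of_gt hq0pos
  have hcd := barrier_contDiff (n := n) C m
  have key : ∀ i : Fin n,
      iteratedFDeriv ℝ 2 (fun y : EuclideanSpace ℝ (Fin n) => C * (1 + ‖y‖^2) ^ (-(m:ℤ))) x
        ![EuclideanSpace.single i 1, EuclideanSpace.single i 1]
      = 4*(m:ℝ)*((m:ℝ)+1)*C*q0 ^ (-(m:ℤ)-2) * (x i)^2 - 2*(m:ℝ)*C*q0 ^ (-(m:ℤ)-1) := by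
    intro i
    set e : EuclideanSpace ℝ (Fin n) := EuclideanSpace.single i 1 with he
    set b := x i with hb
    set q : ℝ → ℝ := fun t => q0 + 2*b*t + t^2 with hqdef
    have hqval : ∀ t, q t = 1 + ‖x + t • e‖^2 := by
      intro t; rw [norm_add_smul_single_sq]; simp only [hqdef, hq0]; ring
    have hqpos : ∀ t, 0 < q t := by
      intro t; rw [hqval]; positivity
    have hq' : ∀ t, HasDerivAt q (2*b + 2*t) t := by
      intro t
      have h1 : HasDerivAt (fun t : ℝ => q0 + 2*b*t + t^2) (0 + 2*b*1 + 2*t) t := by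
        exact ((hasDerivAt_const t q0).add ((hasDerivAt_id t).const_mul (2*b))).add
          (by simpa using hasDerivAt_pow 2 t)
      convert h1 using 1; ring
    have hzp : ∀ t, HasDerivAt (fun t => q t ^ (-(m:ℤ)))
        ((-(m:ℝ)) * q t ^ (-(m:ℤ)-1) * (2*b + 2*t)) t := by
      intro t
      have h := (hasDerivAt_zpow (-(m:ℤ)) (q t) (Or.inl (hqpos t).ne')).comp t (hq' t)
      refine h.congr_deriv ?_
      push_cast; ring
    have hψ : ∀ t, HasDerivAt
        (fun t' : ℝ => (fun y : EuclideanSpace ℝ (Fin n) => C * (1 + ‖y‖^2) ^ (-(m:ℤ))) (x + t' • e))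
        ((C * (-(m:ℝ))) * (q t ^ (-(m:ℤ)-1) * (2*b + 2*t))) t := by
      intro t
      have h3 := (hzp t).const_mul C
      have h4 : HasDerivAt (fun t' : ℝ => C * q t' ^ (-(m:ℤ)))
          ((C * (-(m:ℝ))) * (q t ^ (-(m:ℤ)-1) * (2*b + 2*t))) t := by
        exact h3.congr_deriv (by ring)
      refine h4.congr_of_eventuallyEq ?_
      filter_upwards with t'
      show C * (1 + ‖x + t' • e‖^2) ^ (-(m:ℤ)) = C * q t' ^ (-(m:ℤ))
      rw [hqval t']
    have hc2 : HasDerivAt (fun t => (C * (-(m:ℝ))) * (q t ^ (-(m:ℤ)-1) * (2*b + 2*t)))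
        (4*(m:ℝ)*((m:ℝ)+1)*C*q0 ^ (-(m:ℤ)-2) * b^2 - 2*(m:ℝ)*C*q0 ^ (-(m:ℤ)-1)) 0 := by
      have hzp' : HasDerivAt (fun t => q t ^ (-(m:ℤ)-1))
          (((-(m:ℤ)-1 : ℤ) : ℝ) * q 0 ^ (-(m:ℤ)-1-1) * (2*b + 2*0)) 0 :=
        (hasDerivAt_zpow (-(m:ℤ)-1) (q 0) (Or.inl (hqpos 0).ne')).comp 0 (hq' 0)
      have hlin : HasDerivAt (fun t : ℝ => 2*b + 2*t) 2 0 := by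
        exact ((hasDerivAt_const (0:ℝ) (2*b)).add ((hasDerivAt_id (0:ℝ)).const_mul 2)).congr_deriv (by norm_num)
      have h := (hzp'.mul hlin).const_mul (C * (-(m:ℝ)))
      refine h.congr_deriv ?_
      have hq00 : q 0 = q0 := by simp [hqdef]
      have hexp : (-(m:ℤ)-1-1 : ℤ) = (-(m:ℤ)-2 : ℤ) := by ring
      rw [hq00, hexp]
      push_cast; ring
    rw [iteratedFDeriv_line hcd x e hψ hc2]
  unfold laplacian
  rw [Finset.sum_congr rfl (fun i _ => key i)]
  rw [Finset.sum_sub_distrib, ← Finset.mul_sum, sum_coord_sq, Finset.sum_const,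
    Finset.card_univ, Fintype.card_fin, nsmul_eq_mul]
  have hX : (0:ℝ) < q0 ^ (-(m:ℤ)-2) := zpow_pos hq0pos _
  have hP : (0:ℝ) < q0 ^ (-(m:ℤ)) := zpow_pos hq0pos _
  have hx2 : ‖x‖^2 ≤ q0 := by rw [hq0]; linarith
  have hA : (0:ℝ) ≤ 4*(m:ℝ)*((m:ℝ)+1)*C*q0 ^ (-(m:ℤ)-2) := by positivity
  have hB : (0:ℝ) ≤ (n:ℝ) * (2*(m:ℝ)*C*q0 ^ (-(m:ℤ)-1)) := by
    have : (0:ℝ) < q0 ^ (-(m:ℤ)-1) := zpow_pos hq0pos _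
    positivity
  have h1 : 4*(m:ℝ)*((m:ℝ)+1)*C*q0 ^ (-(m:ℤ)-2) * ‖x‖^2 - (n:ℝ) * (2*(m:ℝ)*C*q0 ^ (-(m:ℤ)-1))
      ≤ 4*(m:ℝ)*((m:ℝ)+1)*C*q0 ^ (-(m:ℤ)-2) * q0 := by
    have := mul_le_mul_of_nonneg_left hx2 hA
    linarith
  have e1 : q0 ^ (-(m:ℤ)-2) * q0 * q0 = q0 ^ (-(m:ℤ)) := by
    rw [← zpow_add_one₀ hq0ne, ← zpow_add_one₀ hq0ne]
    congr 1
    ring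
  have h2 : 4*(m:ℝ)*((m:ℝ)+1)*C*q0 ^ (-(m:ℤ)-2) * q0 ≤ (1/2) * (C * q0 ^ (-(m:ℤ))) := by
    have hkey := mul_le_mul_of_nonneg_left hbig
      (mul_nonneg (mul_nonneg hC hX.le) hq0pos.le)
    nlinarith [e1]
  linarith

set_option maxHeartbeats 2000000 in
lemma integrable_sq_of_sol (hn : 1 ≤ n) {p : ℝ} (hp : 1 < p)
    {A : EuclideanSpace ℝ (Fin n) → ℝ} (hC2 : ContDiff ℝ 2 A) (hpos : ∀ x, 0 < A x)
    (htend : Tendsto A (cocompact _) (nhds 0)) (hmax : ∀ x, A x ≤ A 0)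
    (heq : ∀ x, laplacian A x - A x + A x ^ p = 0) :
    Integrable (fun x => (A x) ^ 2) := by
  have hp1 : (0:ℝ) < p - 1 := by linarith
  set ε : ℝ := (1/2 : ℝ) ^ (1/(p-1)) with hεdef
  have hε : 0 < ε := Real.rpow_pos_of_pos (by norm_num) _
  have hεpow : ε ^ (p-1) = 1/2 := by
    rw [hεdef, ← Real.rpow_mul (by norm_num : (0:ℝ) ≤ 1/2),
      div_mul_cancel₀ 1 hp1.ne', Real.rpow_one]
  -- find R₁ beyond which A < ε
  have hev : ∀ᶠ x in cocompact (EuclideanSpace ℝ (Fin n)), A x < ε :=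
    htend.eventually (eventually_lt_nhds hε)
  obtain ⟨K, hK, hKsub⟩ := Filter.hasBasis_cocompact.eventually_iff.1 hev
  obtain ⟨R₁, hR₁⟩ := hK.isBounded.subset_closedBall (0 : EuclideanSpace ℝ (Fin n))
  have hAsmall : ∀ x : EuclideanSpace ℝ (Fin n), R₁ < ‖x‖ → A x < ε := by
    intro x hx
    apply hKsub
    intro hxK
    have := hR₁ hxK
    rw [Metric.mem_closedBall, dist_zero_right] at this
    linarith
  set R : ℝ := max (R₁ + 1) (8*(n:ℝ)*((n:ℝ)+1)) with hRdef
  have hRR₁ : R₁ < R := lt_of_lt_of_le (by linarith) (le_max_left _ _)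
  have hRn : 8*(n:ℝ)*((n:ℝ)+1) ≤ R := le_max_right _ _
  have hR1 : 1 ≤ R := by
    have : (1:ℝ) ≤ 8*(n:ℝ)*((n:ℝ)+1) := by
      have : (1:ℝ) ≤ (n:ℝ) := by exact_mod_cast hn
      nlinarith
    linarith
  have hRpos : 0 < R := by linarith
  have hRbig : ∀ x : EuclideanSpace ℝ (Fin n), R ≤ ‖x‖ → 8*(n:ℝ)*((n:ℝ)+1) ≤ 1 + ‖x‖^2 := by
    intro x hx
    nlinarith [norm_nonneg x]
  set C : ℝ := ε * (1+R^2)^n with hCdef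
  have hCpos : 0 < C := by positivity
  set w : EuclideanSpace ℝ (Fin n) → ℝ := fun x => C * (1 + ‖x‖^2) ^ (-(n:ℤ)) with hwdef
  have hwcd : ContDiff ℝ 2 w := barrier_contDiff C n
  have hwpos : ∀ x, 0 < w x := by
    intro x
    exact mul_pos hCpos (zpow_pos (by positivity) _)
  -- main barrier estimate
  have hwA : ∀ x : EuclideanSpace ℝ (Fin n), R ≤ ‖x‖ → A x ≤ w x := by
    by_contra hcon
    push_neg at hcon
    obtain ⟨x₁, hx₁R, hx₁⟩ := hcon
    set v : EuclideanSpace ℝ (Fin n) → ℝ := fun x => A x - w x with hvdef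
    have hv1 : 0 < v x₁ := by simp only [hvdef]; linarith
    have htendw : Tendsto w (cocompact (EuclideanSpace ℝ (Fin n))) (nhds 0) := by
      have hnorm : Tendsto (fun x : EuclideanSpace ℝ (Fin n) => ‖x‖)
          (cocompact _) atTop := tendsto_norm_cocompact_atTop
      have h2 : Tendsto (fun x : EuclideanSpace ℝ (Fin n) => (1 + ‖x‖^2)^n)
          (cocompact _) atTop := by
        apply (tendsto_pow_atTop (by omega : n ≠ 0)).comp
        apply tendsto_atTop_add_const_left
        exact (tendsto_pow_atTop (two_ne_zero)).comp hnorm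
      have h3 := h2.inv_tendsto_atTop
      have h4 := h3.const_mul C
      rw [mul_zero] at h4
      convert h4 using 2 with x
      simp only [hwdef, Pi.inv_apply]
      rw [zpow_neg, zpow_natCast]
    have htendv : Tendsto v (cocompact _) (nhds 0) := by
      have := htend.sub htendw
      rw [sub_zero] at this
      exact this
    have hev2 : ∀ᶠ x in cocompact (EuclideanSpace ℝ (Fin n)), v x < v x₁ :=
      htendv.eventually (eventually_lt_nhds hv1)
    obtain ⟨K₂, hK₂, hK₂sub⟩ := Filter.hasBasis_cocompact.eventually_iff.1 hev2
    obtain ⟨M₀, hM₀⟩ := hK₂.isBounded.subset_closedBall (0 : EuclideanSpace ℝ (Fin n))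
    set M : ℝ := max (M₀ + 1) (R + 1) with hMdef
    have hMR : R < M := lt_of_lt_of_le (by linarith) (le_max_right _ _)
    have hM₀M : M₀ < M := lt_of_lt_of_le (by linarith) (le_max_left _ _)
    have hx₁K₂ : x₁ ∈ K₂ := by
      by_contra hx
      exact lt_irrefl _ (hK₂sub hx)
    have hx₁M : ‖x₁‖ ≤ M := by
      have := hM₀ hx₁K₂
      rw [Metric.mem_closedBall, dist_zero_right] at this
      linarith
    set S : Set (EuclideanSpace ℝ (Fin n)) := {x | R ≤ ‖x‖ ∧ ‖x‖ ≤ M} with hSdef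
    have hScompact : IsCompact S := by
      apply (isCompact_closedBall (0 : EuclideanSpace ℝ (Fin n)) M).of_isClosed_subset
      · have : S = (fun x : EuclideanSpace ℝ (Fin n) => ‖x‖) ⁻¹' (Set.Icc R M) := rfl
        rw [this]
        exact isClosed_Icc.preimage continuous_norm
      · intro x hx
        rw [Metric.mem_closedBall, dist_zero_right]
        exact hx.2
    have hx₁S : x₁ ∈ S := ⟨hx₁R, hx₁M⟩
    have hvcont : Continuous v := hC2.continuous.sub hwcd.continuous
    obtain ⟨x₀, hx₀S, hx₀max⟩ := hScompact.exists_isMaxOn ⟨x₁, hx₁S⟩ hvcont.continuousOn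
    have hvx₀ : v x₁ ≤ v x₀ := hx₀max hx₁S
    have hx₀K₂ : x₀ ∈ K₂ := by
      by_contra hx
      exact absurd (hK₂sub hx) (not_lt.2 hvx₀)
    have hx₀M : ‖x₀‖ < M := by
      have := hM₀ hx₀K₂
      rw [Metric.mem_closedBall, dist_zero_right] at this
      linarith
    have hwR : ∀ x : EuclideanSpace ℝ (Fin n), ‖x‖ = R → w x = ε := by
      intro x hx
      simp only [hwdef, hCdef]
      rw [hx, zpow_neg, zpow_natCast]
      field_simp
    have hx₀R : R < ‖x₀‖ := by
      rcases lt_or_eq_of_le hx₀S.1 with h | h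
      · exact h
      · exfalso
        have hA' : A x₀ < ε := hAsmall x₀ (by rw [← h]; exact hRR₁)
        have hw' : w x₀ = ε := hwR x₀ h.symm
        have : v x₀ < 0 := by simp only [hvdef]; linarith
        linarith
    have hlocmax : IsLocalMax v x₀ := by
      have hU : IsOpen ((fun x : EuclideanSpace ℝ (Fin n) => ‖x‖) ⁻¹' (Set.Ioo R M)) :=
        isOpen_Ioo.preimage continuous_norm
      have hx₀U : x₀ ∈ (fun x : EuclideanSpace ℝ (Fin n) => ‖x‖) ⁻¹' (Set.Ioo R M) :=
        ⟨hx₀R, hx₀M⟩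
      filter_upwards [hU.mem_nhds hx₀U] with y hy
      exact hx₀max ⟨hy.1.le, hy.2.le⟩
    have hlap : laplacian v x₀ ≤ 0 :=
      laplacian_nonpos_of_isLocalMax (hC2.sub hwcd) hlocmax
    rw [show v = fun y => A y - w y from rfl, laplacian_sub hC2 hwcd] at hlap
    have hlapA : laplacian A x₀ = A x₀ - A x₀ ^ p := by
      have := heq x₀; linarith
    have hAx₀ : A x₀ < ε := hAsmall x₀ (lt_trans hRR₁ hx₀R)
    have hApb : A x₀ ^ p ≤ (1/2) * A x₀ := by
      have h1 : A x₀ ^ p = A x₀ ^ (p-1) * A x₀ := by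
        have h := Real.rpow_add (hpos x₀) (p-1) 1
        rw [Real.rpow_one] at h
        rw [show (p-1)+1 = p by ring] at h
        exact h
      have h2 : A x₀ ^ (p-1) ≤ ε ^ (p-1) :=
        Real.rpow_le_rpow (hpos x₀).le hAx₀.le (by linarith)
      rw [hεpow] at h2
      rw [h1]
      exact mul_le_mul_of_nonneg_right h2 (hpos x₀).le
    have hlapw : laplacian w x₀ ≤ (1/2) * w x₀ :=
      barrier_laplacian_le hCpos.le x₀ (hRbig x₀ hx₀R.le)
    have hvv : 0 < v x₀ := lt_of_lt_of_le hv1 hvx₀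
    simp only [hvdef] at hvv
    linarith
  -- pointwise bound and integrability
  set Kc : ℝ := max ((A 0)^2 * (1+R)^(2*n)) (C^2 * 2^n) with hKcdef
  have hbound : ∀ x : EuclideanSpace ℝ (Fin n), A x ^ 2 ≤ Kc * (1 + ‖x‖) ^ (-(2*(n:ℝ))) := by
    intro x
    have hb : (0:ℝ) < 1 + ‖x‖ := by positivity
    have hrpow : (1 + ‖x‖) ^ (-(2*(n:ℝ))) = ((1 + ‖x‖) ^ (2*n : ℕ))⁻¹ := by
      rw [Real.rpow_neg hb.le]
      congr 1
      rw [← Real.rpow_natCast (1 + ‖x‖) (2*n)]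
      congr 1
      push_cast; ring
    rw [hrpow]
    set P : ℝ := (1 + ‖x‖) ^ (2*n : ℕ) with hPdef
    have hPpos : 0 < P := by positivity
    have key : A x ^ 2 * P ≤ Kc := by
      rcases le_total ‖x‖ R with hxR | hxR
      · have h1 : A x ^ 2 ≤ (A 0)^2 := pow_le_pow_left₀ (hpos x).le (hmax x) 2
        have h2 : P ≤ (1+R)^(2*n) := pow_le_pow_left₀ hb.le (by linarith) _
        calc A x ^2 * P ≤ (A 0)^2 * (1+R)^(2*n) :=
              mul_le_mul h1 h2 hPpos.le (by positivity)
          _ ≤ Kc := le_max_left _ _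
      · have hw := hwA x hxR
        set Qh : ℝ := (1 + ‖x‖^2)^n with hQdef
        have hQpos : 0 < Qh := by positivity
        have hQ1 : (1:ℝ) ≤ Qh := one_le_pow₀ (by nlinarith [norm_nonneg x])
        have hwx : w x = C * Qh⁻¹ := by
          simp only [hwdef, hQdef]; rw [zpow_neg, zpow_natCast]
        have hA1 : A x ≤ C * Qh⁻¹ := by rw [← hwx]; exact hw
        have hA2 : A x ^ 2 ≤ C^2 * (Qh^2)⁻¹ := by
          have h := pow_le_pow_left₀ (hpos x).le hA1 2
          calc A x^2 ≤ (C*Qh⁻¹)^2 := h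
            _ = C^2 * (Qh^2)⁻¹ := by rw [mul_pow, inv_pow]
        have hP2 : P ≤ 2^n * Qh := by
          have e2 : ((1+‖x‖)^2 : ℝ) ≤ 2*(1+‖x‖^2) := by nlinarith [norm_nonneg x]
          calc P = ((1+‖x‖)^2)^n := by rw [hPdef, pow_mul]
            _ ≤ (2*(1+‖x‖^2))^n := pow_le_pow_left₀ (by positivity) e2 n
            _ = 2^n * Qh := by rw [mul_pow, hQdef]
        calc A x^2 * P ≤ (C^2 * (Qh^2)⁻¹) * (2^n * Qh) :=
              mul_le_mul hA2 hP2 hPpos.le (by positivity)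
          _ = C^2 * 2^n * Qh⁻¹ := by
              have gen : ∀ (c q : ℝ), 0 < q → c^2 * (q^2)⁻¹ * (2^n * q) = c^2*2^n*q⁻¹ := by
                intro c q hq; field_simp
              exact gen C Qh hQpos
          _ ≤ C^2 * 2^n := mul_le_of_le_one_right (by positivity)
              (inv_le_one_of_one_le₀ hQ1)
          _ ≤ Kc := le_max_right _ _
    have h := mul_le_mul_of_nonneg_right key (inv_nonneg.2 hPpos.le)
    calc A x ^2 = A x^2 * P * P⁻¹ := by
          rw [mul_assoc, mul_inv_cancel₀ hPpos.ne', mul_one]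
      _ ≤ Kc * P⁻¹ := h
  have hrank : ((Module.finrank ℝ (EuclideanSpace ℝ (Fin n))):ℝ) < 2*(n:ℝ) := by
    rw [finrank_euclideanSpace_fin]
    have h1 : (1:ℝ) ≤ (n:ℝ) := by exact_mod_cast hn
    linarith
  have hint : Integrable (fun x : EuclideanSpace ℝ (Fin n) => (1+‖x‖) ^ (-(2*(n:ℝ)))) :=
    integrable_one_add_norm hrank
  apply (hint.const_mul Kc).mono' ((hC2.continuous.pow 2).aestronglyMeasurable)
  apply ae_of_all
  intro x
  rw [Real.norm_eq_abs, Pi.pow_apply, abs_of_nonneg (sq_nonneg (A x))]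
  exact hbound x

end AuxLemmas

set_option maxHeartbeats 1000000

/-- If `ω > 0` satisfies the consistency relation `f(ω) = kα`, then
`x ↦ ω^(1/(p-1)) A₀(√ω x)` solves the globally coupled problem. -/
theorem stmt_7 (n : ℕ) (hn : 1 ≤ n) (p : ℝ) (hp : 1 < p)
    (hps : 3 ≤ n → p < ((n : ℝ) + 2) / ((n : ℝ) - 2))
    (A₀ : EuclideanSpace ℝ (Fin n) → ℝ) (hA₀ : IsSolOmega n p 1 A₀)
    (α : ℝ) (hα : α = ∫ y, (A₀ y) ^ 2)
    (f : ℝ → ℝ) (hf : ∀ ω, f ω = (ω - 1) * ω ^ ((n : ℝ) / 2 - 2 / (p - 1)))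
    (k ω : ℝ) (hk : 0 < k) (hω : 0 < ω) (hcons : f ω = k * α) :
    IsSolK n p k (fun x => ω ^ (1 / (p - 1)) * A₀ (Real.sqrt ω • x)) := by
  obtain ⟨hC2, hpos, hrad, htend, hmax, heqA⟩ := hA₀
  have hp1 : (0:ℝ) < p - 1 := by linarith
  set c : ℝ := ω ^ (1 / (p - 1)) with hcdef
  set s : ℝ := Real.sqrt ω with hsdef
  have hcpos : 0 < c := Real.rpow_pos_of_pos hω _
  have hspos : 0 < s := Real.sqrt_pos.2 hω
  have hsne : s ≠ 0 := hspos.ne'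
  have hs2 : s ^ 2 = ω := Real.sq_sqrt hω.le
  have heqA' : ∀ x, laplacian A₀ x - A₀ x + A₀ x ^ p = 0 := by
    intro x; have := heqA x; rw [one_mul] at this; exact this
  have hIntA₀ : Integrable (fun x => (A₀ x) ^ 2) :=
    integrable_sq_of_sol hn hp hC2 hpos htend hmax heqA'
  have hcd : ContDiff ℝ 2 (fun x : EuclideanSpace ℝ (Fin n) => c * A₀ (s • x)) :=
    contDiff_const.mul (hC2.comp (contDiff_const_smul s))
  -- integral computation
  have hrank : Module.finrank ℝ (EuclideanSpace ℝ (Fin n)) = n := finrank_euclideanSpace_fin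
  have hsn : s ^ n = ω ^ ((n:ℝ)/2) := by
    rw [hsdef, Real.sqrt_eq_rpow, ← Real.rpow_natCast (ω ^ (1/2 : ℝ)) n,
      ← Real.rpow_mul hω.le]
    congr 1; ring
  have hc2 : c ^ 2 = ω ^ (2/(p-1)) := by
    rw [hcdef, ← Real.rpow_natCast (ω ^ (1/(p-1) : ℝ)) 2, ← Real.rpow_mul hω.le]
    congr 1; push_cast; ring
  have hI : (∫ y : EuclideanSpace ℝ (Fin n), (c * A₀ (s • y)) ^ 2)
      = ω ^ (2/(p-1) - (n:ℝ)/2) * α := by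
    have e1 : (fun y : EuclideanSpace ℝ (Fin n) => (c * A₀ (s • y)) ^ 2)
        = fun y => c^2 * ((fun z => (A₀ z)^2) (s • y)) := by
      funext y; rw [mul_pow]
    rw [e1, MeasureTheory.integral_const_mul]
    rw [MeasureTheory.Measure.integral_comp_smul (μ := volume) (fun z => (A₀ z)^2) s]
    rw [hrank, ← hα]
    rw [smul_eq_mul]
    have e2 : |((s ^ n)⁻¹)| = ω ^ (-((n:ℝ)/2)) := by
      rw [abs_of_pos (by positivity), hsn, ← Real.rpow_neg hω.le]
    rw [e2, hc2, ← mul_assoc, ← Real.rpow_add hω]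
    congr 2 <;> ring
  -- the compensating identity
  have hcomp : k * (ω ^ (2/(p-1) - (n:ℝ)/2) * α) = ω - 1 := by
    have h1 : k * α = (ω - 1) * ω ^ ((n:ℝ)/2 - 2/(p-1)) := by rw [← hcons, hf]
    have h2 : ω ^ (2/(p-1) - (n:ℝ)/2) * ω ^ ((n:ℝ)/2 - 2/(p-1)) = 1 := by
      rw [← Real.rpow_add hω]
      norm_num
    calc k * (ω ^ (2/(p-1) - (n:ℝ)/2) * α) = (k * α) * ω ^ (2/(p-1) - (n:ℝ)/2) := by ring
      _ = (ω - 1) * (ω ^ (2/(p-1) - (n:ℝ)/2) * ω ^ ((n:ℝ)/2 - 2/(p-1))) := by rw [h1]; ring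
      _ = ω - 1 := by rw [h2, mul_one]
  have hcp : c ^ p = ω * c := by
    have h1 : c ^ p = ω ^ (1/(p-1) * p) := (Real.rpow_mul hω.le _ _).symm
    have h2 : ω * c = ω ^ (1 + 1/(p-1)) := by rw [Real.rpow_add hω, Real.rpow_one]
    rw [h1, h2]
    congr 1
    field_simp
    ring
  refine ⟨hcd, ?_, ?_, ?_, ?_, ?_, ?_⟩
  · intro x; exact mul_pos hcpos (hpos _)
  · intro x y hxy
    simp only
    congr 1
    apply hrad
    rw [norm_smul, norm_smul, hxy]
  · -- tendsto
    have h1 : Tendsto (fun x : EuclideanSpace ℝ (Fin n) => s • x)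
        (cocompact _) (cocompact _) := by
      have heq : (fun x : EuclideanSpace ℝ (Fin n) => s • x)
          = ⇑(Homeomorph.smul ((isUnit_iff_ne_zero.2 hsne).unit)
              (α := EuclideanSpace ℝ (Fin n))) := by
        funext x
        simp [Homeomorph.smul, Units.smul_def]
      rw [heq]
      exact (Homeomorph.smul _).map_cocompact.le
    have h2 := (htend.comp h1).const_mul c
    rw [mul_zero] at h2
    exact h2
  · intro x
    simp only
    have h0 : s • (0 : EuclideanSpace ℝ (Fin n)) = 0 := smul_zero s
    rw [h0]
    exact mul_le_mul_of_nonneg_left (hmax _) hcpos.le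
  · -- integrable
    have h1 : (fun x : EuclideanSpace ℝ (Fin n) => (c * A₀ (s • x)) ^ 2)
        = fun x => c^2 * ((fun z => (A₀ z)^2) (s • x)) := by
      funext x; rw [mul_pow]
    rw [h1]
    exact ((hIntA₀.comp_smul hsne).const_mul _)
  · intro x
    simp only
    set a := A₀ (s • x) with hadef
    have ha : 0 < a := hpos _
    have hlap : laplacian (fun x => c * A₀ (s • x)) x = c * s^2 * laplacian A₀ (s • x) :=
      laplacian_scale hC2 c s x
    have hlapA : laplacian A₀ (s • x) = a - a ^ p := by
      have h := heqA' (s • x); rw [← hadef] at h; linarith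
    have hmulpow : (c * a) ^ p = ω * c * a ^ p := by
      rw [Real.mul_rpow hcpos.le ha.le, hcp]
    rw [hlap, hlapA, hs2, hI, hmulpow]
    have : k * (c * a) * (ω ^ (2/(p-1) - (n:ℝ)/2) * α) = (ω - 1) * (c * a) := by
      calc k * (c * a) * (ω ^ (2/(p-1) - (n:ℝ)/2) * α)
          = (k * (ω ^ (2/(p-1) - (n:ℝ)/2) * α)) * (c * a) := by ring
        _ = (ω - 1) * (c * a) := by rw [hcomp]
    rw [this]
    ring
end

section
/- Let n ≥ 1 be an integer and let p = 1 + 4/(n+2). If k ≥ 1, then the problem ΔA − A + Aᵖ − k A ∫_{ℝⁿ} A² dx = 0 in ℝⁿ, with A > 0, lim_{|x|→∞} A(x) = 0 and A(0) = max_{x∈ℝⁿ} A(x), has no positive radially symmetric classical solution with A² integrable. -/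
open Filter MeasureTheory Real

section maxPrinciple

variable {E : Type*} [NormedAddCommGroup E] [NormedSpace ℝ E]

lemma line_secondDeriv {u : E → ℝ} (hu : ContDiff ℝ 2 u) (z v : E) :
    iteratedFDeriv ℝ 2 u z ![v, v] =
      deriv (deriv fun τ : ℝ => u (z + τ • v)) 0 := by
  have hud : Differentiable ℝ u := hu.differentiable two_ne_zero
  have hline : ∀ τ : ℝ, HasDerivAt (fun σ : ℝ => z + σ • v) v τ := by
    intro τ
    simpa using ((hasDerivAt_id τ).smul_const v).const_add z
  have hφ : deriv (fun σ : ℝ => u (z + σ • v)) = fun τ => fderiv ℝ u (z + τ • v) v := by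
    funext τ
    exact ((hud (z + τ • v)).hasFDerivAt.comp_hasDerivAt τ (hline τ)).deriv
  have hfd : ContDiff ℝ 1 (fderiv ℝ u) := hu.fderiv_right (m := 1) (by norm_num)
  have hF : HasDerivAt (fun τ : ℝ => fderiv ℝ u (z + τ • v))
      (fderiv ℝ (fderiv ℝ u) z v) 0 := by
    have h1 : HasFDerivAt (fderiv ℝ u) (fderiv ℝ (fderiv ℝ u) (z + (0:ℝ) • v)) (z + (0:ℝ) • v) :=
      (hfd.differentiable one_ne_zero (z + (0:ℝ) • v)).hasFDerivAt
    have := h1.comp_hasDerivAt 0 (hline 0)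
    simpa [Function.comp_def] using this
  have h2 : HasDerivAt (fun τ : ℝ => fderiv ℝ u (z + τ • v) v)
      (fderiv ℝ (fderiv ℝ u) z v v) 0 := by
    have := hF.clm_apply (hasDerivAt_const (0:ℝ) v)
    simpa using this
  rw [iteratedFDeriv_two_apply, hφ, h2.deriv]
  simp

lemma secondDeriv_nonpos_of_isLocalMax_s12 {φ : ℝ → ℝ} (hφ : ContDiff ℝ 2 φ)
    (h : IsLocalMax φ 0) : deriv (deriv φ) 0 ≤ 0 := by
  by_contra hpos
  push_neg at hpos
  have h21 : (2 : WithTop ℕ∞) = 1 + 1 := by norm_num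
  have hd1 : Differentiable ℝ φ := hφ.differentiable two_ne_zero
  have hd2 : ContDiff ℝ 1 (deriv φ) := by
    rw [h21, contDiff_succ_iff_deriv] at hφ
    exact hφ.2.2
  have hcont : Continuous (deriv (deriv φ)) := (contDiff_one_iff_deriv.mp hd2).2
  obtain ⟨η, hη, hball⟩ := Metric.isOpen_iff.mp (isOpen_lt continuous_const hcont) 0 hpos
  have hmono' : StrictMonoOn (deriv φ) (Set.Ioo (-η) η) := by
    apply strictMonoOn_of_deriv_pos (convex_Ioo _ _) (hd2.continuous.continuousOn)
    intro x hx
    rw [interior_Ioo] at hx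
    apply hball
    rw [Metric.mem_ball, Real.dist_eq, sub_zero, abs_lt]
    exact ⟨hx.1, hx.2⟩
  have hder0 : deriv φ 0 = 0 := h.deriv_eq_zero
  have hderpos : ∀ x ∈ Set.Ioo (0:ℝ) η, 0 < deriv φ x := by
    intro x hx
    have := hmono' (Set.mem_Ioo.mpr ⟨by linarith [hη], hη⟩) (Set.mem_Ioo.mpr ⟨by linarith [hx.1, hη], hx.2⟩) hx.1
    rwa [hder0] at this
  have hmono : StrictMonoOn φ (Set.Ico (0:ℝ) η) := by
    apply strictMonoOn_of_deriv_pos (convex_Ico _ _) (hd1.continuous.continuousOn)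
    intro x hx
    rw [interior_Ico] at hx
    exact hderpos x hx
  obtain ⟨ε, hε, hev⟩ := Metric.eventually_nhds_iff.mp h
  set x := min (η/2) (ε/2) with hxdef
  have hx0 : 0 < x := by positivity
  have hxη : x < η := lt_of_le_of_lt (min_le_left _ _) (by linarith)
  have hlt : φ 0 < φ x := hmono (Set.mem_Ico.mpr ⟨le_rfl, hη⟩) (Set.mem_Ico.mpr ⟨hx0.le, hxη⟩) hx0
  have hle : φ x ≤ φ 0 := by
    apply hev
    rw [Real.dist_eq, sub_zero, abs_of_pos hx0]
    exact lt_of_le_of_lt (min_le_right _ _) (by linarith)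
  linarith

variable {E : Type*} [NormedAddCommGroup E] [NormedSpace ℝ E]

lemma contDiff_line (z v : E) : ContDiff ℝ 2 (fun τ : ℝ => z + τ • v) :=
  contDiff_const.add (contDiff_id.smul contDiff_const)

lemma iteratedFDeriv_nonpos_of_isLocalMax {u : E → ℝ} (hu : ContDiff ℝ 2 u) {z : E}
    (h : IsLocalMax u z) (v : E) : iteratedFDeriv ℝ 2 u z ![v, v] ≤ 0 := by
  rw [line_secondDeriv hu z v]
  apply secondDeriv_nonpos_of_isLocalMax_s12 (hu.comp (contDiff_line z v))
  have hT : Filter.Tendsto (fun τ : ℝ => z + τ • v) (nhds 0) (nhds z) := by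
    have := ((contDiff_line z v).continuous).continuousAt (x := (0:ℝ))
    simpa [ContinuousAt] using this
  have := hT.eventually h
  simpa [IsLocalMax, IsMaxFilter] using this

lemma secondDeriv_const_mul_norm_sq {E : Type*} [NormedAddCommGroup E]
    [InnerProductSpace ℝ E] (c : ℝ) (z : E) {v : E} (hv : ‖v‖ = 1) :
    iteratedFDeriv ℝ 2 (fun y : E => c * ‖y‖ ^ 2) z ![v, v] = 2 * c := by
  have hcd : ContDiff ℝ 2 (fun y : E => c * ‖y‖ ^ 2) := contDiff_const.mul (contDiff_norm_sq ℝ)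
  rw [line_secondDeriv hcd z v]
  have hfun : (fun τ : ℝ => c * ‖z + τ • v‖ ^ 2)
      = fun τ : ℝ => (c * ‖z‖ ^ 2 + (2 * c * inner ℝ z v) * τ) + c * τ ^ 2 := by
    funext τ
    rw [norm_add_sq_real, real_inner_smul_right, norm_smul, Real.norm_eq_abs, hv]
    rw [mul_one, sq_abs]
    ring
  rw [hfun]
  have hP : ∀ τ : ℝ, HasDerivAt (fun σ : ℝ => (c * ‖z‖ ^ 2 + (2 * c * inner ℝ z v) * σ) + c * σ ^ 2)
      (2 * c * inner ℝ z v + c * (2 * τ)) τ := by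
    intro τ
    have h1 : HasDerivAt (fun σ : ℝ => c * ‖z‖ ^ 2 + (2 * c * inner ℝ z v) * σ)
        (2 * c * inner ℝ z v) τ := by
      simpa using ((hasDerivAt_id τ).const_mul (2 * c * inner ℝ z v)).const_add (c * ‖z‖ ^ 2)
    have h2 : HasDerivAt (fun σ : ℝ => c * σ ^ 2) (c * (2 * τ)) τ := by
      simpa using (hasDerivAt_pow 2 τ).const_mul c
    exact h1.add h2
  have hder : deriv (fun σ : ℝ => (c * ‖z‖ ^ 2 + (2 * c * inner ℝ z v) * σ) + c * σ ^ 2)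
      = fun τ : ℝ => 2 * c * inner ℝ z v + c * (2 * τ) := funext fun τ => (hP τ).deriv
  rw [hder]
  have hQ : HasDerivAt (fun τ : ℝ => 2 * c * inner ℝ z v + c * (2 * τ)) (2 * c) 0 := by
    simpa [mul_comm] using ((hasDerivAt_id (0:ℝ)).const_mul 2 |>.const_mul c).const_add
      (2 * c * inner ℝ z v)
  rw [hQ.deriv]

end maxPrinciple

/-- At a local max of a `C²` function the `laplacian` is non-positive. -/
lemma laplacian_nonpos_of_isLocalMax_s12 {n : ℕ} {A : EuclideanSpace ℝ (Fin n) → ℝ}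
    (hC : ContDiff ℝ 2 A) {z : EuclideanSpace ℝ (Fin n)} (h : IsLocalMax A z) :
    laplacian A z ≤ 0 :=
  Finset.sum_nonpos fun i _ => iteratedFDeriv_nonpos_of_isLocalMax hC h _

lemma key_lower_bound {n : ℕ} (hn : 1 ≤ n) {A : EuclideanSpace ℝ (Fin n) → ℝ}
    (hC : ContDiff ℝ 2 A) (hrad : ∀ x y, ‖x‖ = ‖y‖ → A x = A y)
    {δ : ℝ} (hδ : 0 ≤ δ) (hlap : ∀ y, -δ ≤ laplacian A y)
    (x : EuclideanSpace ℝ (Fin n)) :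
    A 0 ≤ A x + δ * ‖x‖ ^ 2 / (2 * n) := by
  have hnR : (0:ℝ) < n := by exact_mod_cast hn
  rcases eq_or_ne x 0 with rfl | hx0
  · have : (0:ℝ) ≤ δ * ‖(0:EuclideanSpace ℝ (Fin n))‖ ^ 2 / (2 * n) := by positivity
    linarith
  have hxpos : (0:ℝ) < ‖x‖ := norm_pos_iff.mpr hx0
  -- main claim for any c with δ < 2 n c
  have claim : ∀ c : ℝ, δ < 2 * n * c → A 0 ≤ A x + c * ‖x‖ ^ 2 := by
    intro c hc
    set u : EuclideanSpace ℝ (Fin n) → ℝ := fun y => A y + c * ‖y‖ ^ 2 with hu_def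
    have hu : ContDiff ℝ 2 u := hC.add (contDiff_const.mul (contDiff_norm_sq ℝ))
    have hK : IsCompact (Metric.closedBall (0 : EuclideanSpace ℝ (Fin n)) ‖x‖) :=
      isCompact_closedBall _ _
    obtain ⟨z, hzK, hzmax⟩ := hK.exists_isMaxOn ⟨0, by simp⟩ hu.continuous.continuousOn
    have hzle : ‖z‖ ≤ ‖x‖ := by simpa using hzK
    rcases lt_or_eq_of_le hzle with hzlt | hzeq
    · exfalso
      have hloc : IsLocalMax u z := by
        have hmem : Metric.ball (0 : EuclideanSpace ℝ (Fin n)) ‖x‖ ∈ nhds z :=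
          Metric.isOpen_ball.mem_nhds (by simpa using hzlt)
        exact Filter.eventually_of_mem hmem fun y hy => hzmax (Metric.ball_subset_closedBall hy)
      -- split the iterated derivative
      have hC' : ContDiff ℝ ((2:ℕ) : WithTop ℕ∞) A := by exact_mod_cast hC
      have hg' : ContDiff ℝ ((2:ℕ) : WithTop ℕ∞)
          (fun y : EuclideanSpace ℝ (Fin n) => c * ‖y‖ ^ 2) := by
        exact_mod_cast (contDiff_const.mul (contDiff_norm_sq ℝ) :
          ContDiff ℝ 2 (fun y : EuclideanSpace ℝ (Fin n) => c * ‖y‖ ^ 2))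
      have hsplit : ∀ i : Fin n,
          iteratedFDeriv ℝ 2 u z ![EuclideanSpace.single i 1, EuclideanSpace.single i 1]
            = iteratedFDeriv ℝ 2 A z ![EuclideanSpace.single i 1, EuclideanSpace.single i 1]
              + 2 * c := by
        intro i
        have hadd := iteratedFDeriv_add_apply (i := 2) (x := z) hC'.contDiffAt hg'.contDiffAt
        have : iteratedFDeriv ℝ 2 u z = iteratedFDeriv ℝ 2 A z
            + iteratedFDeriv ℝ 2 (fun y : EuclideanSpace ℝ (Fin n) => c * ‖y‖ ^ 2) z := hadd
        rw [this, ContinuousMultilinearMap.add_apply,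
          secondDeriv_const_mul_norm_sq c z (v := EuclideanSpace.single i 1) (by simp)]
      have hsum : laplacian u z ≤ 0 :=
        Finset.sum_nonpos fun i _ => iteratedFDeriv_nonpos_of_isLocalMax hu hloc _
      have : laplacian u z = laplacian A z + n * (2 * c) := by
        unfold laplacian
        rw [Finset.sum_congr rfl fun i _ => hsplit i, Finset.sum_add_distrib,
          Finset.sum_const, Finset.card_univ, Fintype.card_fin]
        simp [nsmul_eq_mul]
      rw [this] at hsum
      have := hlap z
      nlinarith
    · have h0 : u 0 ≤ u z := hzmax (by simp)
      have hAz : A z = A x := hrad z x (by rw [hzeq])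
      simp only [hu_def, norm_zero] at h0
      rw [hAz, hzeq] at h0
      simpa using h0
  apply le_of_forall_pos_le_add
  intro ε hε
  have h2 := claim (δ / (2 * n) + ε / ‖x‖ ^ 2) (by
    rw [mul_add]
    have : 2 * (n:ℝ) * (δ / (2 * n)) = δ := by field_simp
    rw [this]
    have : 0 < 2 * (n:ℝ) * (ε / ‖x‖ ^ 2) := by positivity
    linarith)
  have : (δ / (2 * n) + ε / ‖x‖ ^ 2) * ‖x‖ ^ 2 = δ * ‖x‖ ^ 2 / (2 * n) + ε := by
    field_simp
  linarith [h2, this.le]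

/-- Volume of the cube `{x | ∀ i, |x i| ≤ a}` in Euclidean space. -/
lemma volume_cube {n : ℕ} (a : ℝ) :
    volume {x : EuclideanSpace ℝ (Fin n) | ∀ i, x i ∈ Set.Icc (-a) a}
      = (ENNReal.ofReal (2 * a)) ^ n := by
  have hset : {x : EuclideanSpace ℝ (Fin n) | ∀ i, x i ∈ Set.Icc (-a) a}
      = (MeasurableEquiv.toLp 2 (Fin n → ℝ)).symm ⁻¹'
        (Set.univ.pi fun _ : Fin n => Set.Icc (-a) a) := by
    ext x
    simp [MeasurableEquiv.coe_toLp, Set.mem_pi, Pi.le_def, forall_and,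
      Set.mem_Icc]
  rw [hset, (EuclideanSpace.volume_preserving_symm_measurableEquiv_toLp (Fin n)).measure_preimage
    ((MeasurableSet.univ_pi fun _ => measurableSet_Icc).nullMeasurableSet)]
  rw [volume_pi_pi]
  simp [Real.volume_Icc, Finset.prod_const]
  congr 1
  rw [← two_mul, ENNReal.ofReal_mul (by norm_num), ENNReal.ofReal_ofNat]


set_option maxHeartbeats 1000000 in
/-- Case `p = 1 + 4/(n+2)`: if `k ≥ 1` the globally coupled problem has no positive
radially symmetric classical solution with `A²` integrable. -/
theorem stmt_12 (n : ℕ) (hn : 1 ≤ n) (p : ℝ) (hp : p = 1 + 4 / ((n : ℝ) + 2))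
    (k : ℝ) (hk : 1 ≤ k) :
    ¬ ∃ A : EuclideanSpace ℝ (Fin n) → ℝ, IsSolK n p k A := by
  rintro ⟨A, hC, hpos, hrad, htend, hmax, hint, hpde⟩
  have hnR : (0:ℝ) < n := by exact_mod_cast hn
  have hn2 : (0:ℝ) < (n:ℝ) + 2 := by linarith
  set I : ℝ := ∫ y, (A y) ^ 2 with hI_def
  have hI0 : 0 ≤ I := integral_nonneg fun y => sq_nonneg _
  set ω : ℝ := 1 + k * I with hω_def
  have hω1 : 1 ≤ ω := by nlinarith
  set M : ℝ := A 0 with hM_def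
  have hM : 0 < M := hpos 0
  have hlapeq : ∀ x, laplacian A x = ω * A x - A x ^ p := by
    intro x
    have := hpde x
    rw [hω_def]
    ring_nf
    ring_nf at this
    linarith
  have hp1 : 0 < p - 1 := by
    have h4 : 0 < 4 / ((n:ℝ) + 2) := by positivity
    rw [hp]; linarith
  set s : ℝ := M ^ (p - 1) with hs_def
  have hs0 : 0 < s := Real.rpow_pos_of_pos hM _
  -- rpow splitting
  have hsplit : ∀ x, A x ^ p = A x * A x ^ (p - 1) := by
    intro x
    have h1 : (1 : ℝ) + (p - 1) = p := by ring
    conv_lhs => rw [← h1]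
    rw [Real.rpow_add (hpos x), Real.rpow_one]
  -- Step 1 : ω ≤ s
  have hωs : ω ≤ s := by
    have hloc : IsLocalMax A 0 := Filter.Eventually.of_forall hmax
    have h0 : laplacian A 0 ≤ 0 := laplacian_nonpos_of_isLocalMax_s12 hC hloc
    rw [hlapeq 0, hsplit 0] at h0
    -- ω * M - M * s ≤ 0
    nlinarith [h0]
  set t : ℝ := s - ω with ht_def
  have ht0 : 0 ≤ t := by linarith
  -- Step 2 : laplacian bounded below
  have hlap : ∀ y, -(M * t) ≤ laplacian A y := by
    intro y
    rw [hlapeq y, hsplit y]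
    have h1 : A y ^ (p - 1) ≤ s := Real.rpow_le_rpow (hpos y).le (hmax y) hp1.le
    have h2 : 0 < A y := hpos y
    have h3 : A y ≤ M := hmax y
    nlinarith [Real.rpow_pos_of_pos h2 (p - 1)]
  have hδ : 0 ≤ M * t := mul_nonneg hM.le ht0
  have hkey := key_lower_bound hn hC hrad hδ hlap
  rw [← hM_def] at hkey
  rcases eq_or_lt_of_le ht0 with ht | ht
  · -- t = 0 : A ≥ M everywhere, contradicting decay at infinity
    have hge : ∀ x, M ≤ A x := by
      intro x
      have := hkey x
      rw [← ht] at this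
      simpa using this
    haveI : Nontrivial (EuclideanSpace ℝ (Fin n)) := by
      refine ⟨⟨EuclideanSpace.single ⟨0, hn⟩ 1, 0, fun h => ?_⟩⟩
      have h1 := congrArg (fun w : EuclideanSpace ℝ (Fin n) => w ⟨0, hn⟩) h
      rw [EuclideanSpace.single_apply] at h1
      simp at h1
    have hev : ∀ᶠ x in cocompact (EuclideanSpace ℝ (Fin n)), dist (A x) 0 < M :=
      (Metric.tendsto_nhds.mp htend) M hM
    obtain ⟨x, hx⟩ := hev.exists
    rw [Real.dist_eq, sub_zero, abs_of_pos (hpos x)] at hx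
    exact absurd (hge x) (not_le.mpr hx)
  · -- t > 0 : cube lower bound on the integral
    set b : ℝ := Real.sqrt t with hb_def
    have hb : 0 < b := Real.sqrt_pos.mpr ht
    have hb2 : b ^ 2 = t := Real.sq_sqrt ht.le
    set a : ℝ := b⁻¹ with ha_def
    have ha : 0 < a := by positivity
    set C : Set (EuclideanSpace ℝ (Fin n)) := {x | ∀ i, x i ∈ Set.Icc (-a) a} with hC_def
    have hCmeas : MeasurableSet C := by
      have : C = (MeasurableEquiv.toLp 2 (Fin n → ℝ)).symm ⁻¹'
          (Set.univ.pi fun _ : Fin n => Set.Icc (-a) a) := by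
        ext x
        simp [hC_def, MeasurableEquiv.coe_toLp, Set.mem_pi, Pi.le_def, forall_and,
          Set.mem_Icc]
      rw [this]
      exact (MeasurableEquiv.toLp 2 (Fin n → ℝ)).symm.measurable
        (MeasurableSet.univ_pi fun _ => measurableSet_Icc)
    have hCvol : volume C = (ENNReal.ofReal (2 * a)) ^ n := volume_cube a
    -- on the cube, A ≥ M / 2
    have hAC : ∀ x ∈ C, M / 2 ≤ A x := by
      intro x hx
      have hnorm : ‖x‖ ^ 2 ≤ n * a ^ 2 := by
        have hne : ‖x‖ ^ 2 = ∑ i, x i ^ 2 := by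
          rw [EuclideanSpace.norm_eq, Real.sq_sqrt (by positivity)]
          simp [Real.norm_eq_abs, sq_abs]
        rw [hne]
        calc ∑ i, x i ^ 2 ≤ ∑ _i : Fin n, a ^ 2 := by
              apply Finset.sum_le_sum
              intro i _
              have := hx i
              rw [Set.mem_Icc] at this
              nlinarith [this.1, this.2]
          _ = n * a ^ 2 := by rw [Finset.sum_const, Finset.card_univ, Fintype.card_fin,
              nsmul_eq_mul]
      have h1 := hkey x
      have h2 : M * t * ‖x‖ ^ 2 / (2 * n) ≤ M * t * (n * a ^ 2) / (2 * n) := by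
        have hmul := mul_le_mul_of_nonneg_left hnorm hδ
        have h2n : (0:ℝ) < 2 * n := by positivity
        rw [div_le_div_iff₀ h2n h2n]
        nlinarith [hmul]

      have h3 : M * t * ((n:ℝ) * a ^ 2) / (2 * n) = M / 2 := by
        have hta : t * a ^ 2 = 1 := by
          rw [ha_def, ← hb2]; field_simp
        rw [show M * t * ((n:ℝ) * a ^ 2) = M * n * (t * a ^ 2) by ring, hta, mul_one]
        field_simp
      linarith
    -- integral lower bound
    have hIbound : M ^ 2 / 4 * (2 * a) ^ n ≤ I := by
      have h1 : ∫ y in C, (A y) ^ 2 ≤ I :=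
        setIntegral_le_integral hint (Filter.Eventually.of_forall fun y => sq_nonneg _)
      have hvolC_lt : volume C < ⊤ := by
        rw [hCvol]; exact ENNReal.pow_lt_top ENNReal.ofReal_lt_top
      have h2 : ∫ _y in C, (M / 2) ^ 2 ∂volume ≤ ∫ y in C, (A y) ^ 2 := by
        apply setIntegral_mono_on (integrableOn_const (C := (M/2)^2) hvolC_lt.ne)
          hint.integrableOn hCmeas
        intro x hx
        have := hAC x hx
        nlinarith [hM]
      have h3 : ∫ _y in C, (M / 2) ^ 2 ∂volume = (2 * a) ^ n * (M / 2) ^ 2 := by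
        rw [setIntegral_const, measureReal_def, hCvol, smul_eq_mul]
        congr 1
        rw [ENNReal.toReal_pow, ENNReal.toReal_ofReal (by positivity)]
      have h4 : ((M:ℝ) / 2) ^ 2 = M ^ 2 / 4 := by ring
      rw [h3, h4] at h2
      linarith [h1, h2]
    -- numeric endgame
    have hM4 : M ^ 4 = s ^ (n + 2) := by
      rw [hs_def, ← Real.rpow_natCast (M ^ (p - 1)) (n + 2), ← Real.rpow_mul hM.le]
      have : (p - 1) * ((n:ℕ) + 2 : ℕ) = 4 := by
        push_cast
        rw [hp]
        field_simp
        ring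
      rw [this]
      exact_mod_cast Real.rpow_natCast M 4
    have han : a ^ n * b ^ n = 1 := by
      rw [ha_def, ← mul_pow, inv_mul_cancel₀ hb.ne', one_pow]
    have hIb : M ^ 2 / 4 * 2 ^ n ≤ I * b ^ n := by
      have := mul_le_mul_of_nonneg_right hIbound (pow_nonneg hb.le n)
      rw [mul_pow, mul_assoc, mul_assoc, han, mul_one] at this
      linarith [this]
    have hsq : (M ^ 2 / 4 * 2 ^ n) ^ 2 ≤ I ^ 2 * t ^ n := by
      have h0 : 0 ≤ M ^ 2 / 4 * 2 ^ n := by positivity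
      have := mul_self_le_mul_self h0 hIb
      calc (M ^ 2 / 4 * 2 ^ n) ^ 2 = (M ^ 2 / 4 * 2 ^ n) * (M ^ 2 / 4 * 2 ^ n) := sq _
        _ ≤ (I * b ^ n) * (I * b ^ n) := this
        _ = I ^ 2 * (b ^ 2) ^ n := by ring
        _ = I ^ 2 * t ^ n := by rw [hb2]
    -- (M²/4·2ⁿ)² = 4ⁿ/16·M⁴ = 4ⁿ/16 s^{n+2}
    have hsq' : 4 ^ n / 16 * s ^ (n + 2) ≤ I ^ 2 * t ^ n := by
      have h4n : (4:ℝ) ^ n = 2 ^ (n * 2) := by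
        rw [show (4:ℝ) = 2 ^ 2 by norm_num, ← pow_mul, mul_comm]
      have : (M ^ 2 / 4 * 2 ^ n) ^ 2 = 4 ^ n / 16 * M ^ 4 := by
        rw [h4n]; ring
      rw [this, hM4] at hsq
      exact hsq
    -- key : ω² tⁿ ≤ 4ⁿ/16 s^{n+2}
    have hts : t ≤ s := by linarith
    have hkeynum : ω ^ 2 * t ^ n ≤ 4 ^ n / 16 * s ^ (n + 2) := by
      rcases eq_or_lt_of_le hn with h1 | h2
      · -- n = 1
        have hn1 : n = 1 := h1.symm
        subst hn1
        have habs : ∀ ω' t' s' : ℝ, 1 ≤ ω' → 0 < t' → s' ^ 3 = (ω' + t') ^ 3 →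
            ω' ^ 2 * t' ^ 1 ≤ 4 ^ 1 / 16 * s' ^ (1 + 2) := by
          intro ω' t' s' hω' ht' hsum'
          have hωnn : (0:ℝ) ≤ ω' := by linarith
          norm_num
          nlinarith [mul_nonneg hωnn (sq_nonneg (2 * ω' - t')),
            mul_nonneg hωnn (sq_nonneg t'), pow_nonneg ht'.le 3, hsum']
        exact habs ω t s hω1 ht (by rw [ht_def]; ring)
      · -- n ≥ 2
        have hn2' : 2 ≤ n := h2
        have h16 : (16:ℝ) ≤ 4 ^ n := by
          calc (16:ℝ) = 4 ^ 2 := by norm_num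
            _ ≤ 4 ^ n := pow_le_pow_right₀ (by norm_num) hn2'
        have hsn : s ^ (n + 2) = s ^ 2 * s ^ n := by rw [← pow_add]; ring_nf
        have hωs2 : ω ^ 2 ≤ s ^ 2 := pow_le_pow_left₀ (by linarith) hωs 2
        have htsn : t ^ n ≤ s ^ n := pow_le_pow_left₀ ht0 hts n
        have h1 : ω ^ 2 * t ^ n ≤ s ^ 2 * s ^ n :=
          mul_le_mul hωs2 htsn (pow_nonneg ht0 n) (by positivity)
        have h2' : (1:ℝ) ≤ 4 ^ n / 16 := by linarith [h16]
        calc ω ^ 2 * t ^ n ≤ s ^ 2 * s ^ n := h1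
          _ = 1 * s ^ (n + 2) := by rw [hsn]; ring
          _ ≤ 4 ^ n / 16 * s ^ (n + 2) := by
              apply mul_le_mul_of_nonneg_right h2' (by positivity)
    -- conclude I ≥ ω
    have hI2 : ω ^ 2 * t ^ n ≤ I ^ 2 * t ^ n := le_trans hkeynum hsq'
    have htn : 0 < t ^ n := pow_pos ht n
    have hI2' : ω ^ 2 ≤ I ^ 2 := le_of_mul_le_mul_right hI2 htn
    have hIω : ω ≤ I := by nlinarith [hI2', hI0, hω1]
    -- final contradiction
    nlinarith [hIω, hI0, hk, hω1, mul_nonneg (by linarith : (0:ℝ) ≤ k - 1) hI0]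
end
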